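/- Let M be a proper hypersurface of ℝ^{n+1} and suppose (M, g, x^T, λ, μ) is a quasi-Yamabe soliton with μ ≠ 0. Then the shape operator A_{x^N} of M in the direction of the normal component x^N of the position vector satisfies A_{x^N} x^T = (R − λ − 1 + μ |x^T|²) x^T, and A_{x^N} Z = (R − λ − 1) Z for every tangent vector Z orthogonal to x^T; equivalently, A_{x^N} V = (R − λ − 1) V + μ g(x^T, V) x^T for all tangent vectors V, where R is the scalar curvature of M. -/

import Mathlib

open scoped RealInnerProductSpace

noncomputable section

/-- Extrinsic data of a Riemannian submanifold `M` of the Euclidean space `ℝ^m`,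
recorded through: the position vector field `pos` (i.e. the isometric immersion
`x`), the tangent spaces `tangent p ⊆ ℝ^m`, the ambient Euclidean covariant
derivative `amb` (`∇̃`), the induced Levi-Civita connection `conn` (`∇`), the
second fundamental form `sff` (`h`), the shape operator `shape` (`A`) and the
normal connection `normConn` (`D`), subject to the formulas of Gauss and of
Weingarten.  Since the immersion is isometric, the induced metric is
`g(v, w) = ⟪v, w⟫` on tangent vectors. -/
structure EuclideanSubmanifold (m : ℕ) where
  /-- the underlying manifold -/
  M : Type
  /-- the topology of `M` -/
  topology : TopologicalSpace M
  /-- the position vector field `x`, i.e. the isometric immersion into `ℝ^m` -/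
  pos : M → EuclideanSpace ℝ (Fin m)
  /-- the tangent space at each point, viewed as a subspace of `ℝ^m` -/
  tangent : M → Submodule ℝ (EuclideanSpace ℝ (Fin m))
  /-- the ambient Euclidean covariant derivative `∇̃` of an `ℝ^m`-valued field
  along a (tangent) vector field -/
  amb : (M → EuclideanSpace ℝ (Fin m)) → (M → EuclideanSpace ℝ (Fin m)) →
    (M → EuclideanSpace ℝ (Fin m))
  /-- the Levi-Civita connection `∇` of the induced metric -/
  conn : (M → EuclideanSpace ℝ (Fin m)) → (M → EuclideanSpace ℝ (Fin m)) →
    (M → EuclideanSpace ℝ (Fin m))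
  /-- the second fundamental form `h` (pointwise, on tangent vectors) -/
  sff : M → EuclideanSpace ℝ (Fin m) → EuclideanSpace ℝ (Fin m) →
    EuclideanSpace ℝ (Fin m)
  /-- the shape operator `A η v` (pointwise: normal vector `η`, tangent vector `v`) -/
  shape : M → EuclideanSpace ℝ (Fin m) → EuclideanSpace ℝ (Fin m) →
    EuclideanSpace ℝ (Fin m)
  /-- the normal connection `D` -/
  normConn : (M → EuclideanSpace ℝ (Fin m)) → (M → EuclideanSpace ℝ (Fin m)) →
    (M → EuclideanSpace ℝ (Fin m))
  amb_add : ∀ X Y Z, amb X (fun p => Y p + Z p) = fun p => amb X Y p + amb X Z p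
  conn_tangent : ∀ X Y, (∀ p, X p ∈ tangent p) → (∀ p, Y p ∈ tangent p) →
    ∀ p, conn X Y p ∈ tangent p
  sff_normal : ∀ p v w, sff p v w ∈ (tangent p)ᗮ
  sff_symm : ∀ p v w, sff p v w = sff p w v
  shape_tangent : ∀ p η v, shape p η v ∈ tangent p
  normConn_normal : ∀ X η, (∀ p, X p ∈ tangent p) → (∀ p, η p ∈ (tangent p)ᗮ) →
    ∀ p, normConn X η p ∈ (tangent p)ᗮ
  /-- the formula of Gauss: `∇̃_X Y = ∇_X Y + h(X, Y)` -/
  gauss : ∀ X Y, (∀ p, X p ∈ tangent p) → (∀ p, Y p ∈ tangent p) →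
    ∀ p, amb X Y p = conn X Y p + sff p (X p) (Y p)
  /-- the formula of Weingarten: `∇̃_X η = −A_η X + D_X η` -/
  weingarten : ∀ X η, (∀ p, X p ∈ tangent p) → (∀ p, η p ∈ (tangent p)ᗮ) →
    ∀ p, amb X η p = -shape p (η p) (X p) + normConn X η p
  /-- `⟨h(X, Y), η⟩ = g(A_η X, Y)` -/
  shape_sff : ∀ p v w η, v ∈ tangent p → w ∈ tangent p → η ∈ (tangent p)ᗮ →
    ⟪sff p v w, η⟫ = ⟪shape p η v, w⟫
  /-- the position vector field is concurrent: `∇̃_V x = V` -/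
  concurrent : ∀ X, (∀ p, X p ∈ tangent p) → amb X pos = X

attribute [instance] EuclideanSubmanifold.topology

namespace EuclideanSubmanifold

variable {m : ℕ} (S : EuclideanSubmanifold m)

/-- The tangential component `x^T` of the position vector field. -/
def posT (p : S.M) : EuclideanSpace ℝ (Fin m) :=
  ((S.tangent p).orthogonalProjection (S.pos p) : EuclideanSpace ℝ (Fin m))

/-- The normal component `x^N` of the position vector field, so `x = x^T + x^N`. -/
def posN (p : S.M) : EuclideanSpace ℝ (Fin m) :=
  S.pos p - S.posT p

/-- A vector field on `M` is tangent if it takes values in the tangent spaces. -/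
def IsTangent (X : S.M → EuclideanSpace ℝ (Fin m)) : Prop :=
  ∀ p, X p ∈ S.tangent p

/-- The Lie derivative of the induced metric along a vector field `X`, expressed
through the Levi-Civita connection: `(L_X g)(V, W) = g(∇_V X, W) + g(∇_W X, V)`. -/
def lieDeriv (X V W : S.M → EuclideanSpace ℝ (Fin m)) (p : S.M) : ℝ :=
  ⟪S.conn V X p, W p⟫ + ⟪S.conn W X p, V p⟫

/-- The Riemann curvature `(0,4)`-tensor of `M`, obtained from the equation of
Gauss (the ambient Euclidean space being flat):
`⟨R(X,Y)Z, W⟩ = ⟨h(X,W), h(Y,Z)⟩ − ⟨h(X,Z), h(Y,W)⟩`. -/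
def rm (p : S.M) (x y z w : EuclideanSpace ℝ (Fin m)) : ℝ :=
  ⟪S.sff p x w, S.sff p y z⟫ - ⟪S.sff p x z, S.sff p y w⟫

/-- The Ricci tensor of `M`, the trace of the curvature tensor over an
orthonormal basis of the tangent space. -/
def ricci (p : S.M) (x y : EuclideanSpace ℝ (Fin m)) : ℝ :=
  ∑ i, S.rm p (stdOrthonormalBasis ℝ (S.tangent p) i : EuclideanSpace ℝ (Fin m))
    x y (stdOrthonormalBasis ℝ (S.tangent p) i : EuclideanSpace ℝ (Fin m))

/-- The scalar curvature `R` of `M`: the sum `∑_{i ≠ j} K_{ij}` of sectional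
curvatures over an orthonormal basis of the tangent space (the diagonal terms
of the double trace vanish). -/
def scal (p : S.M) : ℝ :=
  ∑ i, S.ricci p (stdOrthonormalBasis ℝ (S.tangent p) i : EuclideanSpace ℝ (Fin m))
    (stdOrthonormalBasis ℝ (S.tangent p) i : EuclideanSpace ℝ (Fin m))

/-- `(M, g, X, λ)` is a Yamabe soliton: `(1/2) L_X g = (R − λ) g`. -/
def IsYamabeSoliton (X : S.M → EuclideanSpace ℝ (Fin m)) (l : ℝ) : Prop :=
  ∀ V W, S.IsTangent V → S.IsTangent W → ∀ p,
    (1 / 2) * S.lieDeriv X V W p = (S.scal p - l) * ⟪V p, W p⟫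

/-- `(M, g, X, λ, μ)` is a quasi-Yamabe soliton:
`(1/2) L_X g = (R − λ) g + μ X^♯ ⊗ X^♯`, where `X^♯` is the 1-form dual to `X`. -/
def IsQuasiYamabeSoliton (X : S.M → EuclideanSpace ℝ (Fin m)) (l : ℝ)
    (μ : S.M → ℝ) : Prop :=
  ∀ V W, S.IsTangent V → S.IsTangent W → ∀ p,
    (1 / 2) * S.lieDeriv X V W p =
      (S.scal p - l) * ⟪V p, W p⟫ + μ p * ⟪X p, V p⟫ * ⟪X p, W p⟫

end EuclideanSubmanifold

namespace EuclideanSubmanifold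

/-- **Formulas (4.4)–(4.6).** Let `M` be a proper hypersurface of `ℝ^{n+1}`
and suppose `(M, g, x^T, λ, μ)` is a quasi-Yamabe soliton with `μ ≠ 0`.  Then
the shape operator `A_{x^N}` in the direction of the normal component `x^N` of
the position vector satisfies
`A_{x^N} x^T = (R − λ − 1 + μ |x^T|²) x^T`, and `A_{x^N} Z = (R − λ − 1) Z`
for every tangent vector `Z` orthogonal to `x^T`; equivalently,
`A_{x^N} V = (R − λ − 1) V + μ g(x^T, V) x^T` for all tangent vectors `V`,
where `R` is the scalar curvature of `M`. -/
theorem shape_posN_formulas {n : ℕ} (S : EuclideanSubmanifold (n + 1))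
    (hdim : ∀ p, Module.finrank ℝ (S.tangent p) = n)
    (hproper : ∃ U : Set S.M, IsOpen U ∧ Dense U ∧
      ∀ p ∈ U, S.posT p ≠ 0 ∧ S.posN p ≠ 0)
    (l : ℝ) (μ : S.M → ℝ) (hμ : ∀ p, μ p ≠ 0)
    (hsol : S.IsQuasiYamabeSoliton S.posT l μ) :
    ∀ p, (S.shape p (S.posN p) (S.posT p) =
            (S.scal p - l - 1 + μ p * ‖S.posT p‖ ^ 2) • S.posT p) ∧
      (∀ z ∈ S.tangent p, ⟪z, S.posT p⟫ = 0 →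
        S.shape p (S.posN p) z = (S.scal p - l - 1) • z) ∧
      (∀ v ∈ S.tangent p, S.shape p (S.posN p) v =
        (S.scal p - l - 1) • v + (μ p * ⟪S.posT p, v⟫) • S.posT p) := by
  have posT_tangent : S.IsTangent S.posT := fun p =>
    ((S.tangent p).orthogonalProjection (S.pos p)).2
  have posN_normal : ∀ p, S.posN p ∈ (S.tangent p)ᗮ := fun p =>
    (S.tangent p).sub_starProjection_mem_orthogonal (S.pos p)
  -- key A : ∇_X x^T = X + A_{x^N} X
  have keyA : ∀ X, S.IsTangent X → ∀ p,
      S.conn X S.posT p = X p + S.shape p (S.posN p) (X p) := by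
    intro X hX p
    have hconc := congrFun (S.concurrent X hX) p
    have hpos : S.pos = fun q => S.posT q + S.posN q := by
      funext q; simp [posN]
    rw [hpos, congrFun (S.amb_add X S.posT S.posN) p,
      S.gauss X S.posT hX posT_tangent p,
      S.weingarten X S.posN hX posN_normal p] at hconc
    set b := S.sff p (X p) (S.posT p) with hb
    set c := S.shape p (S.posN p) (X p) with hc
    set T := S.conn X S.posT p - c with hT
    have hN : X p - T = b + S.normConn X S.posN p := by
      rw [hT, ← hconc]; abel
    have hmemT : X p - T ∈ S.tangent p := sub_mem (hX p)
      (sub_mem (S.conn_tangent X S.posT hX posT_tangent p) (hc ▸ S.shape_tangent p _ _))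
    have hmemN : X p - T ∈ (S.tangent p)ᗮ := hN ▸ add_mem (hb ▸ S.sff_normal p _ _)
      (S.normConn_normal X S.posN hX posN_normal p)
    have h0 : X p - T = 0 := inner_self_eq_zero.mp
      ((Submodule.mem_orthogonal _ _).1 hmemN _ hmemT)
    have hXT : X p = T := sub_eq_zero.mp h0
    rw [hT] at hXT
    exact eq_add_of_sub_eq hXT.symm
  have symmA : ∀ p v w, v ∈ S.tangent p → w ∈ S.tangent p →
      ⟪S.shape p (S.posN p) v, w⟫ = ⟪S.shape p (S.posN p) w, v⟫ := by
    intro p v w hv hw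
    rw [← S.shape_sff p v w _ hv hw (posN_normal p),
      ← S.shape_sff p w v _ hw hv (posN_normal p), S.sff_symm]
  have keyB : ∀ p v w, v ∈ S.tangent p → w ∈ S.tangent p →
      ⟪S.shape p (S.posN p) v, w⟫ =
        (S.scal p - l - 1) * ⟪v, w⟫ + μ p * ⟪S.posT p, v⟫ * ⟪S.posT p, w⟫ := by
    intro p v w hv hw
    set V : S.M → EuclideanSpace ℝ (Fin (n + 1)) :=
      fun q => ((S.tangent q).orthogonalProjection v : EuclideanSpace ℝ (Fin (n + 1)))
      with hVdef
    set W : S.M → EuclideanSpace ℝ (Fin (n + 1)) :=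
      fun q => ((S.tangent q).orthogonalProjection w : EuclideanSpace ℝ (Fin (n + 1)))
      with hWdef
    have hV : S.IsTangent V := fun q => ((S.tangent q).orthogonalProjection v).2
    have hW : S.IsTangent W := fun q => ((S.tangent q).orthogonalProjection w).2
    have hVp : V p = v := (Submodule.starProjection_eq_self_iff (K := S.tangent p)).mpr hv
    have hWp : W p = w := (Submodule.starProjection_eq_self_iff (K := S.tangent p)).mpr hw
    have hs := hsol V W hV hW p
    simp only [lieDeriv] at hs
    rw [keyA V hV p, keyA W hW p, hVp, hWp, inner_add_left, inner_add_left,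
      symmA p w v hw hv] at hs
    linear_combination hs + (1 / 2) * real_inner_comm w v
  have keyC : ∀ p v, v ∈ S.tangent p → S.shape p (S.posN p) v =
      (S.scal p - l - 1) • v + (μ p * ⟪S.posT p, v⟫) • S.posT p := by
    intro p v hv
    set D := S.shape p (S.posN p) v -
      ((S.scal p - l - 1) • v + (μ p * ⟪S.posT p, v⟫) • S.posT p) with hD
    have hDt : D ∈ S.tangent p := sub_mem (S.shape_tangent p _ _)
      (add_mem (Submodule.smul_mem _ _ hv) (Submodule.smul_mem _ _ (posT_tangent p)))
    have hDorth : ∀ w ∈ S.tangent p, ⟪D, w⟫ = 0 := by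
      intro w hw
      rw [hD, inner_sub_left, inner_add_left, real_inner_smul_left,
        real_inner_smul_left, keyB p v w hv hw]
      ring
    have hD0 : D = 0 := inner_self_eq_zero.mp (hDorth D hDt)
    exact sub_eq_zero.mp hD0
  intro p
  refine ⟨?_, ?_, fun v hv => keyC p v hv⟩
  · rw [keyC p (S.posT p) (posT_tangent p), real_inner_self_eq_norm_sq,
      ← add_smul]
  · intro z hz h0
    rw [keyC p z hz, real_inner_comm, h0]
    simp

end EuclideanSubmanifold
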